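/- arXiv:2407.18313 — 2 statements merged into one kernel-verified Lean document; each statement's English description precedes it below -/
import Mathlib

section
/- (Main theorem: the majorization update does not increase stress formula two.) Let Y be a configuration with η₂²(Y) > 0, σ₂(Y) ≤ 1, and d_ij(Y) > 0 for every pair i < j with w_ij > 0. Define ξ(X,Y) := η²(Δ) + (1 − σ₂(Y))·η₁²(X) − 2·Σ_{i<j} w_ij δ_ij ⟨X i − X j, Y i − Y j⟩/d_ij(Y) + σ₂(Y)·d̄(Y)·Σ_{i<j} w_ij d_ij(X)²/d_ij(Y). If X* is a configuration with η₂²(X*) > 0 that minimizes ξ(·,Y), i.e. ξ(X*,Y) ≤ ξ(X,Y) for every configuration X, then σ₂(X*) ≤ σ₂(Y). -/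
open scoped BigOperators

/-- Distance between points `i` and `j` of a configuration. -/
noncomputable def confDist {n p : ℕ} (X : Fin n → EuclideanSpace ℝ (Fin p))
    (i j : Fin n) : ℝ := ‖X i - X j‖

/-- Sum of `f i j` over all pairs `i < j`. -/
noncomputable def pairSum (n : ℕ) (f : Fin n → Fin n → ℝ) : ℝ :=
  ∑ i : Fin n, ∑ j : Fin n, if i < j then f i j else 0

/-- Raw stress. -/
noncomputable def sigmaR {n p : ℕ} (w δ : Fin n → Fin n → ℝ)
    (X : Fin n → EuclideanSpace ℝ (Fin p)) : ℝ :=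
  pairSum n (fun i j => w i j * (δ i j - confDist X i j) ^ 2)

/-- `η₁²`. -/
noncomputable def eta1sq {n p : ℕ} (w : Fin n → Fin n → ℝ)
    (X : Fin n → EuclideanSpace ℝ (Fin p)) : ℝ :=
  pairSum n (fun i j => w i j * confDist X i j ^ 2)

/-- Mean of the distances. -/
noncomputable def dbar {n p : ℕ} (w : Fin n → Fin n → ℝ)
    (X : Fin n → EuclideanSpace ℝ (Fin p)) : ℝ :=
  pairSum n (fun i j => w i j * confDist X i j)

/-- Variance of the distances, `η₂²`. -/
noncomputable def eta2sq {n p : ℕ} (w : Fin n → Fin n → ℝ)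
    (X : Fin n → EuclideanSpace ℝ (Fin p)) : ℝ :=
  pairSum n (fun i j => w i j * (confDist X i j - dbar w X) ^ 2)

/-- `η²(Δ)`. -/
noncomputable def etaDeltaSq (n : ℕ) (w δ : Fin n → Fin n → ℝ) : ℝ :=
  pairSum n (fun i j => w i j * δ i j ^ 2)

/-- Kruskal's stress formula two. -/
noncomputable def sigma2 {n p : ℕ} (w δ : Fin n → Fin n → ℝ)
    (X : Fin n → EuclideanSpace ℝ (Fin p)) : ℝ :=
  sigmaR w δ X / eta2sq w X

/-- The Dinkelbach difference `ω(X,Y)`. -/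
noncomputable def omegaFun {n p : ℕ} (w δ : Fin n → Fin n → ℝ)
    (X Y : Fin n → EuclideanSpace ℝ (Fin p)) : ℝ :=
  sigmaR w δ X - sigma2 w δ Y * eta2sq w X

/-- The quadratic majorizer `ξ(X,Y)`. -/
noncomputable def xiFun {n p : ℕ} (w δ : Fin n → Fin n → ℝ)
    (X Y : Fin n → EuclideanSpace ℝ (Fin p)) : ℝ :=
  etaDeltaSq n w δ + (1 - sigma2 w δ Y) * eta1sq w X -
    2 * pairSum n (fun i j =>
      w i j * δ i j * (inner ℝ (X i - X j) (Y i - Y j) : ℝ) / confDist Y i j) +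
    sigma2 w δ Y * dbar w Y *
      pairSum n (fun i j => w i j * confDist X i j ^ 2 / confDist Y i j)


section Aux

variable {n : ℕ}

lemma pairSum_congr {f g : Fin n → Fin n → ℝ} (h : ∀ i j : Fin n, i < j → f i j = g i j) :
    pairSum n f = pairSum n g := by
  unfold pairSum
  refine Finset.sum_congr rfl fun i _ => Finset.sum_congr rfl fun j _ => ?_
  by_cases hij : i < j
  · simp [hij, h i j hij]
  · simp [hij]

lemma pairSum_mono {f g : Fin n → Fin n → ℝ} (h : ∀ i j : Fin n, i < j → f i j ≤ g i j) :
    pairSum n f ≤ pairSum n g := by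
  unfold pairSum
  refine Finset.sum_le_sum fun i _ => Finset.sum_le_sum fun j _ => ?_
  by_cases hij : i < j
  · simpa [hij] using h i j hij
  · simp [hij]

lemma pairSum_nonneg {f : Fin n → Fin n → ℝ} (h : ∀ i j : Fin n, i < j → 0 ≤ f i j) :
    0 ≤ pairSum n f := by
  have := pairSum_mono (f := fun _ _ => (0 : ℝ)) (g := f) (fun i j hij => h i j hij)
  simpa [pairSum] using this

lemma pairSum_add (f g : Fin n → Fin n → ℝ) :
    pairSum n (fun i j => f i j + g i j) = pairSum n f + pairSum n g := by
  unfold pairSum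
  rw [← Finset.sum_add_distrib]
  refine Finset.sum_congr rfl fun i _ => ?_
  rw [← Finset.sum_add_distrib]
  refine Finset.sum_congr rfl fun j _ => ?_
  by_cases hij : i < j <;> simp [hij]

lemma pairSum_smul (c : ℝ) (f : Fin n → Fin n → ℝ) :
    pairSum n (fun i j => c * f i j) = c * pairSum n f := by
  unfold pairSum
  rw [Finset.mul_sum]
  refine Finset.sum_congr rfl fun i _ => ?_
  rw [Finset.mul_sum]
  refine Finset.sum_congr rfl fun j _ => ?_
  by_cases hij : i < j <;> simp [hij]

lemma pairSum_prod (f : Fin n → Fin n → ℝ) :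
    pairSum n f =
      ∑ q ∈ Finset.univ ×ˢ (Finset.univ : Finset (Fin n)),
        (if q.1 < q.2 then f q.1 q.2 else 0) := by
  rw [Finset.sum_product]
  rfl

lemma sigmaR_expand {p : ℕ} (w δ : Fin n → Fin n → ℝ)
    (X : Fin n → EuclideanSpace ℝ (Fin p)) :
    sigmaR w δ X = etaDeltaSq n w δ + eta1sq w X -
      2 * pairSum n (fun i j => w i j * δ i j * confDist X i j) := by
  have h1 : sigmaR w δ X = pairSum n (fun i j =>
      (w i j * δ i j ^ 2 + w i j * confDist X i j ^ 2) +
        (-2) * (w i j * δ i j * confDist X i j)) :=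
    pairSum_congr (fun i j _ => by ring)
  rw [h1, pairSum_add, pairSum_add, pairSum_smul]
  unfold etaDeltaSq eta1sq
  ring

lemma eta2sq_expand {p : ℕ} (w : Fin n → Fin n → ℝ) (hw1 : pairSum n w = 1)
    (X : Fin n → EuclideanSpace ℝ (Fin p)) :
    eta2sq w X = eta1sq w X - dbar w X ^ 2 := by
  have h1 : eta2sq w X = pairSum n (fun i j =>
      (w i j * confDist X i j ^ 2 + (-(2 * dbar w X)) * (w i j * confDist X i j)) +
        (dbar w X ^ 2) * w i j) :=
    pairSum_congr (fun i j _ => by ring)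
  rw [h1, pairSum_add, pairSum_add, pairSum_smul, pairSum_smul, hw1]
  unfold eta1sq dbar
  ring

end Aux

/-- Main theorem: any minimizer of the quadratic majorizer `ξ(·,Y)` does not
increase Kruskal's stress formula two, provided `σ₂(Y) ≤ 1`. -/
theorem majorization_update_decreases_stress2
    {n p : ℕ} (hn : 2 ≤ n) (hp : 1 ≤ p)
    (w δ : Fin n → Fin n → ℝ)
    (hw : ∀ i j : Fin n, i < j → 0 ≤ w i j)
    (hw1 : pairSum n w = 1)
    (hδ : ∀ i j : Fin n, i < j → 0 ≤ δ i j)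
    (Y : Fin n → EuclideanSpace ℝ (Fin p))
    (hY2 : 0 < eta2sq w Y)
    (hY1 : sigma2 w δ Y ≤ 1)
    (hYd : ∀ i j : Fin n, i < j → 0 < w i j → 0 < confDist Y i j)
    (Xstar : Fin n → EuclideanSpace ℝ (Fin p))
    (hXstar2 : 0 < eta2sq w Xstar)
    (hmin : ∀ X : Fin n → EuclideanSpace ℝ (Fin p),
      xiFun w δ Xstar Y ≤ xiFun w δ X Y) :
    sigma2 w δ Xstar ≤ sigma2 w δ Y := by
  set s : ℝ := sigma2 w δ Y with hs
  have hdnn : ∀ (Z : Fin n → EuclideanSpace ℝ (Fin p)) (i j : Fin n),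
      0 ≤ confDist Z i j := fun Z i j => norm_nonneg _
  have hs0 : 0 ≤ s := by
    have hR : 0 ≤ sigmaR w δ Y :=
      pairSum_nonneg fun i j hij => mul_nonneg (hw i j hij) (sq_nonneg _)
    rw [hs, sigma2]
    exact div_nonneg hR hY2.le
  -- omega expansion
  have homega : ∀ X : Fin n → EuclideanSpace ℝ (Fin p),
      omegaFun w δ X Y = etaDeltaSq n w δ + (1 - s) * eta1sq w X -
        2 * pairSum n (fun i j => w i j * δ i j * confDist X i j) +
        s * dbar w X ^ 2 := by
    intro X
    unfold omegaFun
    rw [sigmaR_expand w δ X, eta2sq_expand w hw1 X, ← hs]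
    ring
  -- the majorization inequality ω(X,Y) ≤ ξ(X,Y)
  have hkey : ∀ X : Fin n → EuclideanSpace ℝ (Fin p),
      omegaFun w δ X Y ≤ xiFun w δ X Y := by
    intro X
    rw [homega X]
    unfold xiFun
    rw [← hs]
    -- first: Cauchy-Schwarz termwise for the inner-product sum
    have hP : pairSum n (fun i j =>
        w i j * δ i j * (inner ℝ (X i - X j) (Y i - Y j) : ℝ) / confDist Y i j) ≤
        pairSum n (fun i j => w i j * δ i j * confDist X i j) := by
      refine pairSum_mono fun i j hij => ?_
      rcases (hw i j hij).eq_or_lt with hw0 | hw0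
      · simp [← hw0]
      · have hdY := hYd i j hij hw0
        have hinner : (inner ℝ (X i - X j) (Y i - Y j) : ℝ) ≤
            confDist X i j * confDist Y i j := real_inner_le_norm _ _
        have hwδ : 0 ≤ w i j * δ i j := mul_nonneg hw0.le (hδ i j hij)
        rw [div_le_iff₀ hdY]
        nlinarith [mul_le_mul_of_nonneg_left hinner hwδ]
    -- second: Cauchy-Schwarz for dbar
    have hQ : dbar w X ^ 2 ≤ dbar w Y *
        pairSum n (fun i j => w i j * confDist X i j ^ 2 / confDist Y i j) := by
      have h1 : dbar w X = ∑ q ∈ Finset.univ ×ˢ (Finset.univ : Finset (Fin n)),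
          (if q.1 < q.2 then
            Real.sqrt (w q.1 q.2) * confDist X q.1 q.2 / Real.sqrt (confDist Y q.1 q.2)
          else 0) *
          (if q.1 < q.2 then
            Real.sqrt (w q.1 q.2) * Real.sqrt (confDist Y q.1 q.2)
          else 0) := by
        rw [dbar, pairSum_prod]
        refine Finset.sum_congr rfl fun q _ => ?_
        by_cases hij : q.1 < q.2
        · rw [if_pos hij, if_pos hij, if_pos hij]
          rcases (hw q.1 q.2 hij).eq_or_lt with hw0 | hw0
          · simp [← hw0]
          · have hdY := hYd q.1 q.2 hij hw0
            have h1 : Real.sqrt (confDist Y q.1 q.2) ≠ 0 := by positivity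
            have hww := Real.sq_sqrt (hw q.1 q.2 hij)
            rw [div_mul_eq_mul_div, eq_div_iff h1]
            linear_combination -confDist X q.1 q.2 * Real.sqrt (confDist Y q.1 q.2) * hww
        · simp [hij]
      have h2 : ∑ q ∈ Finset.univ ×ˢ (Finset.univ : Finset (Fin n)),
          (if q.1 < q.2 then
            Real.sqrt (w q.1 q.2) * confDist X q.1 q.2 / Real.sqrt (confDist Y q.1 q.2)
          else 0) ^ 2 =
          pairSum n (fun i j => w i j * confDist X i j ^ 2 / confDist Y i j) := by
        rw [pairSum_prod]
        refine Finset.sum_congr rfl fun q _ => ?_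
        by_cases hij : q.1 < q.2
        · rw [if_pos hij, if_pos hij, div_pow, mul_pow, Real.sq_sqrt (hw q.1 q.2 hij),
            Real.sq_sqrt (hdnn Y q.1 q.2)]
        · simp [hij]
      have h3 : ∑ q ∈ Finset.univ ×ˢ (Finset.univ : Finset (Fin n)),
          (if q.1 < q.2 then
            Real.sqrt (w q.1 q.2) * Real.sqrt (confDist Y q.1 q.2)
          else 0) ^ 2 = dbar w Y := by
        rw [dbar, pairSum_prod]
        refine Finset.sum_congr rfl fun q _ => ?_
        by_cases hij : q.1 < q.2
        · rw [if_pos hij, if_pos hij, mul_pow, Real.sq_sqrt (hw q.1 q.2 hij),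
            Real.sq_sqrt (hdnn Y q.1 q.2)]
        · simp [hij]
      calc dbar w X ^ 2
          ≤ (∑ q ∈ Finset.univ ×ˢ (Finset.univ : Finset (Fin n)),
              (if q.1 < q.2 then
                Real.sqrt (w q.1 q.2) * confDist X q.1 q.2 / Real.sqrt (confDist Y q.1 q.2)
              else 0) ^ 2) *
            ∑ q ∈ Finset.univ ×ˢ (Finset.univ : Finset (Fin n)),
              (if q.1 < q.2 then
                Real.sqrt (w q.1 q.2) * Real.sqrt (confDist Y q.1 q.2)
              else 0) ^ 2 := by
            rw [h1]; exact Finset.sum_mul_sq_le_sq_mul_sq _ _ _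
        _ = dbar w Y *
            pairSum n (fun i j => w i j * confDist X i j ^ 2 / confDist Y i j) := by
            rw [h2, h3]; ring
    have hQ' : s * dbar w X ^ 2 ≤ s * dbar w Y *
        pairSum n (fun i j => w i j * confDist X i j ^ 2 / confDist Y i j) := by
      calc s * dbar w X ^ 2
          ≤ s * (dbar w Y *
              pairSum n (fun i j => w i j * confDist X i j ^ 2 / confDist Y i j)) :=
            mul_le_mul_of_nonneg_left hQ hs0
        _ = _ := by ring
    linarith [hP, hQ']
  -- ξ(Y,Y) = 0
  have hxiYY : xiFun w δ Y Y = 0 := by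
    have e1 : pairSum n (fun i j =>
        w i j * δ i j * (inner ℝ (Y i - Y j) (Y i - Y j) : ℝ) / confDist Y i j) =
        pairSum n (fun i j => w i j * δ i j * confDist Y i j) := by
      refine pairSum_congr fun i j hij => ?_
      rcases (hw i j hij).eq_or_lt with hw0 | hw0
      · simp [← hw0]
      · have hdY := hYd i j hij hw0
        rw [real_inner_self_eq_norm_sq]
        have hnorm : ‖Y i - Y j‖ = confDist Y i j := rfl
        rw [hnorm]
        field_simp
    have e2 : pairSum n (fun i j => w i j * confDist Y i j ^ 2 / confDist Y i j) =
        dbar w Y := by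
      refine pairSum_congr fun i j hij => ?_
      rcases (hw i j hij).eq_or_lt with hw0 | hw0
      · simp [← hw0]
      · have hdY := hYd i j hij hw0
        field_simp
    unfold xiFun
    rw [e1, e2, ← hs]
    have hR : sigmaR w δ Y = etaDeltaSq n w δ + eta1sq w Y -
        2 * pairSum n (fun i j => w i j * δ i j * confDist Y i j) := sigmaR_expand w δ Y
    have hE : eta2sq w Y = eta1sq w Y - dbar w Y ^ 2 := eta2sq_expand w hw1 Y
    have hsY : s * eta2sq w Y = sigmaR w δ Y := by
      rw [hs, sigma2, div_mul_cancel₀ _ hY2.ne']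
    linear_combination -hR - hsY + s * hE
  have h1 : omegaFun w δ Xstar Y ≤ 0 := by
    calc omegaFun w δ Xstar Y ≤ xiFun w δ Xstar Y := hkey Xstar
      _ ≤ xiFun w δ Y Y := hmin Y
      _ = 0 := hxiYY
  unfold omegaFun at h1
  rw [sigma2, div_le_iff₀ hXstar2]
  linarith [h1]
end

section
/- (Gradient of the variance of the distances.) Let X be an n×p real matrix with d_ij(X) > 0 for every pair i < j with w_ij > 0. Then the function η₂² is Fréchet differentiable at X with derivative the linear map H ↦ 2·trace(Hᵀ (V − M(X)) X). -/
open scoped BigOperators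
open Matrix

/-- Euclidean distance between rows `i` and `j` of an `n × p` matrix. -/
noncomputable def rowDist {n p : ℕ} (X : Matrix (Fin n) (Fin p) ℝ) (i j : Fin n) : ℝ :=
  Real.sqrt (∑ k : Fin p, (X i k - X j k) ^ 2)

/-- The matrix `A_ij = (e_i - e_j)(e_i - e_j)ᵀ`. -/
noncomputable def Amat {n : ℕ} (i j : Fin n) : Matrix (Fin n) (Fin n) ℝ :=
  Matrix.vecMulVec (Pi.single i 1 - Pi.single j 1) (Pi.single i 1 - Pi.single j 1)

/-- The matrix `V = Σ_{i<j} w_ij A_ij`. -/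
noncomputable def Vmat {n : ℕ} (w : Fin n → Fin n → ℝ) : Matrix (Fin n) (Fin n) ℝ :=
  ∑ i : Fin n, ∑ j : Fin n, if i < j then w i j • Amat i j else 0

/-- Mean distance `d̄(X) = Σ_{i<j} w_ij d_ij(X)`. -/
noncomputable def dbarM {n p : ℕ} (w : Fin n → Fin n → ℝ)
    (X : Matrix (Fin n) (Fin p) ℝ) : ℝ :=
  ∑ i : Fin n, ∑ j : Fin n, if i < j then w i j * rowDist X i j else 0

/-- The matrix `M(X) = d̄(X) · Σ_{i<j, d_ij(X)>0} (w_ij/d_ij(X)) A_ij`. -/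
noncomputable def Mmat {n p : ℕ} (w : Fin n → Fin n → ℝ)
    (X : Matrix (Fin n) (Fin p) ℝ) : Matrix (Fin n) (Fin n) ℝ :=
  dbarM w X •
    ∑ i : Fin n, ∑ j : Fin n,
      if i < j ∧ 0 < rowDist X i j then (w i j / rowDist X i j) • Amat i j else 0

/-- The variance of the distances `η₂²(X)` as a function of the configuration matrix. -/
noncomputable def eta2sqM {n p : ℕ} (w : Fin n → Fin n → ℝ)
    (X : Matrix (Fin n) (Fin p) ℝ) : ℝ :=
  ∑ i : Fin n, ∑ j : Fin n,
    if i < j then w i j * (rowDist X i j - dbarM w X) ^ 2 else 0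

attribute [local instance] Matrix.frobeniusNormedAddCommGroup Matrix.frobeniusNormedSpace

/- ### Auxiliary constructions -/

/-- The continuous linear map extracting entry `(i,k)`. -/
noncomputable def entryCLM {n p : ℕ} (i : Fin n) (k : Fin p) :
    Matrix (Fin n) (Fin p) ℝ →L[ℝ] ℝ :=
  LinearMap.toContinuousLinearMap
    { toFun := fun Y : Matrix (Fin n) (Fin p) ℝ => Y i k
      map_add' := fun _ _ => rfl
      map_smul' := fun _ _ => rfl }

lemma entryCLM_apply {n p : ℕ} (i : Fin n) (k : Fin p) (Y : Matrix (Fin n) (Fin p) ℝ) :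
    entryCLM i k Y = Y i k := rfl

/-- `Dij X i j : H ↦ ∑ₖ (Xᵢₖ - Xⱼₖ)(Hᵢₖ - Hⱼₖ)`. -/
noncomputable def Dij {n p : ℕ} (X : Matrix (Fin n) (Fin p) ℝ) (i j : Fin n) :
    Matrix (Fin n) (Fin p) ℝ →L[ℝ] ℝ :=
  ∑ k : Fin p, (X i k - X j k) • (entryCLM i k - entryCLM j k)

lemma Dij_apply {n p : ℕ} (X H : Matrix (Fin n) (Fin p) ℝ) (i j : Fin n) :
    Dij X i j H = ∑ k, (X i k - X j k) * (H i k - H j k) := by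
  simp [Dij, entryCLM_apply]

lemma trace_Amat {n p : ℕ} {i j : Fin n} (hij : i ≠ j) (H X : Matrix (Fin n) (Fin p) ℝ) :
    Matrix.trace (Hᵀ * Amat i j * X) = ∑ k, (H i k - H j k) * (X i k - X j k) := by
  simp only [Matrix.trace, Matrix.diag_apply, Matrix.mul_apply, Amat, Matrix.vecMulVec_apply,
    Matrix.transpose_apply, Pi.sub_apply, Pi.single_apply]
  refine Finset.sum_congr rfl fun k _ => ?_
  simp only [mul_sub, mul_ite, mul_one, mul_zero, sub_mul, ite_mul, one_mul, zero_mul,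
    Finset.sum_sub_distrib, Finset.sum_ite_irrel, Finset.sum_ite_eq', Finset.mem_univ, if_true,
    Finset.sum_const_zero]

lemma trace_ite_sum {n p : ℕ} (H X : Matrix (Fin n) (Fin p) ℝ)
    (P : Fin n → Fin n → Prop) [∀ i j, Decidable (P i j)] (r : Fin n → Fin n → ℝ) :
    Matrix.trace (Hᵀ * (∑ i : Fin n, ∑ j : Fin n,
        if P i j then r i j • Amat i j else 0) * X)
      = ∑ i : Fin n, ∑ j : Fin n,
          if P i j then r i j * Matrix.trace (Hᵀ * Amat i j * X) else 0 := by
  rw [Matrix.mul_sum, Matrix.sum_mul, Matrix.trace_sum]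
  refine Finset.sum_congr rfl fun i _ => ?_
  rw [Matrix.mul_sum, Matrix.sum_mul, Matrix.trace_sum]
  refine Finset.sum_congr rfl fun j _ => ?_
  split
  · rw [Matrix.mul_smul, Matrix.smul_mul, Matrix.trace_smul, smul_eq_mul]
  · rw [Matrix.mul_zero, Matrix.zero_mul, Matrix.trace_zero]

lemma hasFDerivAt_sqdist {n p : ℕ} (X : Matrix (Fin n) (Fin p) ℝ) (i j : Fin n) :
    HasFDerivAt (fun Y : Matrix (Fin n) (Fin p) ℝ => ∑ k, (Y i k - Y j k) ^ 2)
      ((2:ℝ) • Dij X i j) X := by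
  have h : ∀ k ∈ Finset.univ, HasFDerivAt (fun Y : Matrix (Fin n) (Fin p) ℝ => (Y i k - Y j k) ^ 2)
      ((2 * (X i k - X j k)) • (entryCLM i k - entryCLM j k)) X := by
    intro k _
    have h1 : HasFDerivAt (fun Y : Matrix (Fin n) (Fin p) ℝ => Y i k - Y j k)
        (entryCLM i k - entryCLM j k) X :=
      ((entryCLM i k).hasFDerivAt).sub ((entryCLM j k).hasFDerivAt)
    have h2 := h1.mul h1
    have he : (fun Y : Matrix (Fin n) (Fin p) ℝ => (Y i k - Y j k) ^ 2)
        = fun Y => (Y i k - Y j k) * (Y i k - Y j k) := by funext Y; ring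
    rw [he, two_mul, add_smul]
    exact h2
  have := HasFDerivAt.fun_sum h
  refine this.congr_fderiv ?_
  rw [Dij, Finset.smul_sum]
  exact Finset.sum_congr rfl fun k _ => by rw [smul_smul]

lemma hasFDerivAt_rowDist {n p : ℕ} (X : Matrix (Fin n) (Fin p) ℝ) (i j : Fin n)
    (hd : 0 < rowDist X i j) :
    HasFDerivAt (fun Y => rowDist Y i j) ((rowDist X i j)⁻¹ • Dij X i j) X := by
  have hs : (∑ k, (X i k - X j k) ^ 2) ≠ 0 := by
    intro h0
    rw [rowDist, h0, Real.sqrt_zero] at hd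
    exact lt_irrefl 0 hd
  have hsqrt : HasDerivAt Real.sqrt (1 / (2 * Real.sqrt (∑ k, (X i k - X j k) ^ 2)))
      (∑ k, (X i k - X j k) ^ 2) := Real.hasDerivAt_sqrt hs
  have := hsqrt.comp_hasFDerivAt X (hasFDerivAt_sqdist X i j)
  refine this.congr_fderiv (?_ : (1 / (2 * Real.sqrt (∑ k, (X i k - X j k) ^ 2))) • (2:ℝ) • Dij X i j
    = (rowDist X i j)⁻¹ • Dij X i j)
  rw [smul_smul]
  rw [show Real.sqrt (∑ k, (X i k - X j k) ^ 2) = rowDist X i j from rfl]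
  congr 1
  field_simp

/-- The derivative of `d̄`. -/
noncomputable def Ddbar {n p : ℕ} (w : Fin n → Fin n → ℝ) (X : Matrix (Fin n) (Fin p) ℝ) :
    Matrix (Fin n) (Fin p) ℝ →L[ℝ] ℝ :=
  ∑ i : Fin n, ∑ j : Fin n,
    if i < j ∧ 0 < rowDist X i j then w i j • ((rowDist X i j)⁻¹ • Dij X i j) else 0

lemma hasFDerivAt_dbar {n p : ℕ} (w : Fin n → Fin n → ℝ)
    (hw : ∀ i j : Fin n, i < j → 0 ≤ w i j)
    (X : Matrix (Fin n) (Fin p) ℝ)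
    (hd : ∀ i j : Fin n, i < j → 0 < w i j → 0 < rowDist X i j) :
    HasFDerivAt (dbarM w) (Ddbar w X) X := by
  have : HasFDerivAt
      (fun Y : Matrix (Fin n) (Fin p) ℝ => ∑ i : Fin n, ∑ j : Fin n,
        if i < j then w i j * rowDist Y i j else 0) (Ddbar w X) X := by
    apply HasFDerivAt.fun_sum
    intro i _
    apply HasFDerivAt.fun_sum
    intro j _
    by_cases hij : i < j
    · by_cases hdij : 0 < rowDist X i j
      · simp only [if_pos hij, if_pos (And.intro hij hdij)]
        exact (hasFDerivAt_rowDist X i j hdij).const_mul (w i j)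
      · have hw0 : w i j = 0 := by
          rcases lt_or_eq_of_le (hw i j hij) with h | h
          · exact absurd (hd i j hij h) hdij
          · exact h.symm
        have hneg : ¬ (i < j ∧ 0 < rowDist X i j) := fun h => hdij h.2
        simp only [if_pos hij, if_neg hneg, hw0, zero_mul]
        exact hasFDerivAt_const 0 X
    · have hneg : ¬ (i < j ∧ 0 < rowDist X i j) := fun h => hij h.1
      simp only [if_neg hij, if_neg hneg]
      exact hasFDerivAt_const 0 X
  exact this

/-- The derivative of `∑ w d²`. -/
noncomputable def Dsumsq {n p : ℕ} (w : Fin n → Fin n → ℝ) (X : Matrix (Fin n) (Fin p) ℝ) :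
    Matrix (Fin n) (Fin p) ℝ →L[ℝ] ℝ :=
  ∑ i : Fin n, ∑ j : Fin n, if i < j then w i j • ((2:ℝ) • Dij X i j) else 0

lemma hasFDerivAt_sumsq {n p : ℕ} (w : Fin n → Fin n → ℝ) (X : Matrix (Fin n) (Fin p) ℝ) :
    HasFDerivAt (fun Y : Matrix (Fin n) (Fin p) ℝ => ∑ i : Fin n, ∑ j : Fin n,
      if i < j then w i j * rowDist Y i j ^ 2 else 0) (Dsumsq w X) X := by
  have he : (fun Y : Matrix (Fin n) (Fin p) ℝ => ∑ i : Fin n, ∑ j : Fin n,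
      if i < j then w i j * rowDist Y i j ^ 2 else 0)
      = fun Y => ∑ i : Fin n, ∑ j : Fin n,
      if i < j then w i j * ∑ k, (Y i k - Y j k) ^ 2 else 0 := by
    funext Y
    refine Finset.sum_congr rfl fun i _ => Finset.sum_congr rfl fun j _ => ?_
    congr 1
    rw [rowDist, Real.sq_sqrt]
    positivity
  rw [he]
  apply HasFDerivAt.fun_sum
  intro i _
  apply HasFDerivAt.fun_sum
  intro j _
  by_cases hij : i < j
  · simp only [if_pos hij]
    exact (hasFDerivAt_sqdist X i j).const_mul (w i j)
  · simp only [if_neg hij]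
    exact hasFDerivAt_const 0 X

lemma eta_eq {n p : ℕ} (w : Fin n → Fin n → ℝ)
    (hw1 : (∑ i : Fin n, ∑ j : Fin n, if i < j then w i j else 0) = 1) :
    eta2sqM w = fun Y : Matrix (Fin n) (Fin p) ℝ =>
      (∑ i : Fin n, ∑ j : Fin n, if i < j then w i j * rowDist Y i j ^ 2 else 0)
        - dbarM w Y ^ 2 := by
  funext Y
  rw [eta2sqM]
  have key : ∀ (i j : Fin n),
      (if i < j then w i j * (rowDist Y i j - dbarM w Y) ^ 2 else 0)
        = (if i < j then w i j * rowDist Y i j ^ 2 else 0)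
          - 2 * dbarM w Y * (if i < j then w i j * rowDist Y i j else 0)
          + dbarM w Y ^ 2 * (if i < j then w i j else 0) := by
    intro i j
    split <;> ring
  calc (∑ i : Fin n, ∑ j : Fin n,
      if i < j then w i j * (rowDist Y i j - dbarM w Y) ^ 2 else 0)
      = (∑ i : Fin n, ∑ j : Fin n, if i < j then w i j * rowDist Y i j ^ 2 else 0)
        - 2 * dbarM w Y * (∑ i : Fin n, ∑ j : Fin n, if i < j then w i j * rowDist Y i j else 0)
        + dbarM w Y ^ 2 * (∑ i : Fin n, ∑ j : Fin n, if i < j then w i j else 0) := by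
        rw [Finset.mul_sum, Finset.mul_sum, ← Finset.sum_sub_distrib, ← Finset.sum_add_distrib]
        refine Finset.sum_congr rfl fun i _ => ?_
        rw [Finset.mul_sum, Finset.mul_sum, ← Finset.sum_sub_distrib, ← Finset.sum_add_distrib]
        exact Finset.sum_congr rfl fun j _ => key i j
    _ = (∑ i : Fin n, ∑ j : Fin n, if i < j then w i j * rowDist Y i j ^ 2 else 0)
        - dbarM w Y ^ 2 := by
        rw [hw1, ← dbarM]
        ring

/-- Gradient of the variance of the distances: `η₂²` is Fréchet differentiable at `X`
with derivative `H ↦ 2·trace(Hᵀ (V − M(X)) X)`. -/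
theorem hasFDerivAt_eta2sq
    {n p : ℕ} (hn : 2 ≤ n) (hp : 1 ≤ p)
    (w : Fin n → Fin n → ℝ)
    (hw : ∀ i j : Fin n, i < j → 0 ≤ w i j)
    (hw1 : (∑ i : Fin n, ∑ j : Fin n, if i < j then w i j else 0) = 1)
    (X : Matrix (Fin n) (Fin p) ℝ)
    (hd : ∀ i j : Fin n, i < j → 0 < w i j → 0 < rowDist X i j) :
    ∃ L : Matrix (Fin n) (Fin p) ℝ →L[ℝ] ℝ,
      (∀ H : Matrix (Fin n) (Fin p) ℝ,
        L H = 2 * Matrix.trace (Hᵀ * (Vmat w - Mmat w X) * X)) ∧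
      HasFDerivAt (eta2sqM w) L X := by
  have hdbar := hasFDerivAt_dbar w hw X hd
  have hdbarsq : HasFDerivAt (fun Y : Matrix (Fin n) (Fin p) ℝ => dbarM w Y ^ 2)
      ((2 * dbarM w X) • Ddbar w X) X := by
    have h2 := hdbar.mul hdbar
    have he : (fun Y : Matrix (Fin n) (Fin p) ℝ => dbarM w Y ^ 2)
        = fun Y => dbarM w Y * dbarM w Y := by funext Y; ring
    rw [he, two_mul, add_smul]
    exact h2
  have hD : HasFDerivAt (eta2sqM w) (Dsumsq w X - (2 * dbarM w X) • Ddbar w X) X := by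
    rw [eta_eq w hw1]
    exact (hasFDerivAt_sumsq w X).sub hdbarsq
  refine ⟨_, ?_, hD⟩
  intro H
  -- pointwise identity
  rw [ContinuousLinearMap.sub_apply, ContinuousLinearMap.smul_apply, smul_eq_mul]
  have hV : Matrix.trace (Hᵀ * Vmat w * X)
      = ∑ i : Fin n, ∑ j : Fin n,
          if i < j then w i j * Matrix.trace (Hᵀ * Amat i j * X) else 0 :=
    trace_ite_sum H X (fun i j => i < j) w
  have hM : Matrix.trace (Hᵀ * Mmat w X * X)
      = dbarM w X * ∑ i : Fin n, ∑ j : Fin n,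
          if i < j ∧ 0 < rowDist X i j
          then (w i j / rowDist X i j) * Matrix.trace (Hᵀ * Amat i j * X) else 0 := by
    rw [Mmat, Matrix.mul_smul, Matrix.smul_mul, Matrix.trace_smul, smul_eq_mul]
    rw [trace_ite_sum H X (fun i j => i < j ∧ 0 < rowDist X i j)
      (fun i j => w i j / rowDist X i j)]
  have hsub : Matrix.trace (Hᵀ * (Vmat w - Mmat w X) * X)
      = Matrix.trace (Hᵀ * Vmat w * X) - Matrix.trace (Hᵀ * Mmat w X * X) := by
    rw [Matrix.mul_sub, Matrix.sub_mul, Matrix.trace_sub]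
  have hDsumsq : Dsumsq w X H = ∑ i : Fin n, ∑ j : Fin n,
      if i < j then w i j * (2 * Dij X i j H) else 0 := by
    rw [Dsumsq, ContinuousLinearMap.sum_apply]
    refine Finset.sum_congr rfl fun i _ => ?_
    rw [ContinuousLinearMap.sum_apply]
    refine Finset.sum_congr rfl fun j _ => ?_
    split <;> simp
  have hDdbar : Ddbar w X H = ∑ i : Fin n, ∑ j : Fin n,
      if i < j ∧ 0 < rowDist X i j then w i j * ((rowDist X i j)⁻¹ * Dij X i j H) else 0 := by
    rw [Ddbar, ContinuousLinearMap.sum_apply]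
    refine Finset.sum_congr rfl fun i _ => ?_
    rw [ContinuousLinearMap.sum_apply]
    refine Finset.sum_congr rfl fun j _ => ?_
    split <;> simp
  have htr : ∀ i j : Fin n, i < j →
      Matrix.trace (Hᵀ * Amat i j * X) = Dij X i j H := by
    intro i j hij
    rw [trace_Amat (ne_of_lt hij) H X, Dij_apply]
    exact Finset.sum_congr rfl fun k _ => by ring
  have hV' : Matrix.trace (Hᵀ * Vmat w * X)
      = ∑ i : Fin n, ∑ j : Fin n, if i < j then w i j * Dij X i j H else 0 := by
    rw [hV]
    refine Finset.sum_congr rfl fun i _ => Finset.sum_congr rfl fun j _ => ?_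
    split
    · rw [htr i j (by assumption)]
    · rfl
  have hM' : Matrix.trace (Hᵀ * Mmat w X * X)
      = dbarM w X * ∑ i : Fin n, ∑ j : Fin n,
          if i < j ∧ 0 < rowDist X i j
          then w i j * ((rowDist X i j)⁻¹ * Dij X i j H) else 0 := by
    rw [hM]
    congr 1
    refine Finset.sum_congr rfl fun i _ => Finset.sum_congr rfl fun j _ => ?_
    split
    · rename_i h
      rw [htr i j h.1, div_eq_mul_inv, mul_assoc]
    · rfl
  have hS1 : Dsumsq w X H
      = 2 * ∑ i : Fin n, ∑ j : Fin n, if i < j then w i j * Dij X i j H else 0 := by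
    rw [hDsumsq, Finset.mul_sum]
    refine Finset.sum_congr rfl fun i _ => ?_
    rw [Finset.mul_sum]
    refine Finset.sum_congr rfl fun j _ => ?_
    split <;> ring
  rw [hS1, hsub, hV', hM', hDdbar]
  ring
end
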